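/- For all positive integers n, M, and q ≥ 1, the probability that a uniformly random q-ary word of length M is an instance of Zₙ is nondecreasing in M: |C(n,q,M+1)|/q^{M+1} ≥ |C(n,q,M)|/q^{M}. -/

import Mathlib

/-- `W` is an instance of the pattern `V`: the image of `V` under a semigroup
homomorphism sending each letter to a nonempty word. -/
def IsInst {α β : Type} (V : List α) (W : List β) : Prop :=
  ∃ φ : α → List β, (∀ a ∈ V, φ a ≠ []) ∧ W = (V.map φ).flatten

/-- `U` encounters `V`: some contiguous subword (infix) of `U` is an instance of `V`. -/
def Encounters {α β : Type} (U : List β) (V : List α) : Prop :=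
  ∃ W : List β, W <:+: U ∧ IsInst V W

/-- `U` avoids `V`: `U` does not encounter `V`. -/
def Avoids {α β : Type} (U : List β) (V : List α) : Prop :=
  ¬ Encounters U V

/-- The Zimin words over the alphabet ℕ: `Z₀ = ε`, `Z_{n+1} = Zₙ · n · Zₙ`. -/
def Zimin : ℕ → List ℕ
  | 0 => []
  | n + 1 => Zimin n ++ n :: Zimin n

/-- `zimf n q` is the smallest `M` such that every `q`-ary word of length `M`
encounters the Zimin word `Zₙ`. -/
noncomputable def zimf (n q : ℕ) : ℕ :=
  sInf {M : ℕ | ∀ W : List (Fin q), W.length = M → Encounters W (Zimin n)}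

/-- `ZC n q M` is the set of `q`-ary words of length `M` that are instances of `Zₙ`. -/
def ZC (n q M : ℕ) : Set (List (Fin q)) :=
  {W | W.length = M ∧ IsInst (Zimin n) W}

/-! ### Auxiliary lemmas -/

lemma zimin_mem_lt {n a : ℕ} (h : a ∈ Zimin n) : a < n := by
  induction n with
  | zero => simp [Zimin] at h
  | succ n ih =>
    simp only [Zimin, List.mem_append, List.mem_cons] at h
    rcases h with h | h | h
    · exact (ih h).trans (Nat.lt_succ_self n)
    · omega
    · exact (ih h).trans (Nat.lt_succ_self n)

lemma isInst_succ_iff {β : Type} {n : ℕ} {W : List β} :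
    IsInst (Zimin (n + 1)) W ↔
      ∃ P x : List β, IsInst (Zimin n) P ∧ x ≠ [] ∧ W = P ++ x ++ P := by
  constructor
  · rintro ⟨φ, hφ, rfl⟩
    refine ⟨((Zimin n).map φ).flatten, φ n,
      ⟨φ, fun a ha => hφ a (by simp [Zimin, ha]), rfl⟩,
      hφ n (by simp [Zimin]), ?_⟩
    simp [Zimin]
  · rintro ⟨P, x, ⟨ψ, hψ, rfl⟩, hx, rfl⟩
    refine ⟨fun a => if a = n then x else ψ a, ?_, ?_⟩
    · intro a ha
      rcases eq_or_ne a n with rfl | hne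
      · simpa using hx
      · have haZ : a ∈ Zimin n := by
          simp only [Zimin, List.mem_append, List.mem_cons] at ha
          rcases ha with h | h | h
          · exact h
          · exact absurd h hne
          · exact h
        simpa [hne] using hψ a haZ
    · have hmap : (Zimin n).map (fun a => if a = n then x else ψ a) = (Zimin n).map ψ :=
        List.map_congr_left fun a ha => if_neg (Nat.ne_of_lt (zimin_mem_lt ha))
      simp [Zimin, hmap]

/-- `ℓ` is a "qualifying border length" for `W` w.r.t. level `n`. -/
def QB {β : Type} (n : ℕ) (W : List β) (ℓ : ℕ) : Prop :=
  2 * ℓ < W.length ∧ W.drop (W.length - ℓ) = W.take ℓ ∧ IsInst (Zimin n) (W.take ℓ)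

lemma QB_decomp {β : Type} {n : ℕ} {W : List β} {ℓ : ℕ} (h : QB n W ℓ) :
    ∃ x : List β, x ≠ [] ∧ W.drop ℓ = x ++ W.take ℓ := by
  obtain ⟨h1, h2, _⟩ := h
  refine ⟨(W.drop ℓ).take (W.length - 2 * ℓ), ?_, ?_⟩
  · have hlen : ((W.drop ℓ).take (W.length - 2 * ℓ)).length = W.length - 2 * ℓ := by
      rw [List.length_take, List.length_drop]; omega
    intro hx
    rw [hx] at hlen
    simp at hlen
    omega
  · rw [← h2]
    have he : W.length - ℓ = ℓ + (W.length - 2 * ℓ) := by omega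
    rw [he, ← List.drop_drop]
    exact (List.take_append_drop _ _).symm

lemma qb_exists_iff {β : Type} {n : ℕ} {W : List β} :
    IsInst (Zimin (n + 1)) W ↔ ∃ ℓ, QB n W ℓ := by
  rw [isInst_succ_iff]
  constructor
  · rintro ⟨P, x, hP, hx, rfl⟩
    have hxlen : 0 < x.length := List.length_pos_iff.mpr hx
    have htake : ((P ++ x ++ P).take P.length) = P := by
      rw [List.append_assoc]
      exact List.take_left
    refine ⟨P.length, ?_, ?_, ?_⟩
    · simp only [List.length_append]; omega
    · rw [htake]
      have hlen : (P ++ x ++ P).length - P.length = (P ++ x).length := by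
        simp [List.length_append]; omega
      rw [hlen]
      exact List.drop_left
    · rw [htake]; exact hP
  · rintro ⟨ℓ, h⟩
    obtain ⟨x, hx, hdrop⟩ := QB_decomp h
    refine ⟨W.take ℓ, x, h.2.2, hx, ?_⟩
    conv_lhs => rw [← List.take_append_drop ℓ W, hdrop]
    rw [List.append_assoc]

lemma ins_take {β : Type} {W : List β} {p ℓ : ℕ} (a : β) (hℓ : ℓ ≤ p)
    (hp : p ≤ W.length) :
    (W.take p ++ a :: W.drop p).take ℓ = W.take ℓ := by
  rw [List.take_append, List.length_take]
  have h0 : ℓ - min p W.length = 0 := by omega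
  rw [h0, List.take_zero, List.append_nil, List.take_take]
  congr 1
  omega

lemma ins_drop {β : Type} {W : List β} {p ℓ : ℕ} (a : β) (h : ℓ + p ≤ W.length) :
    (W.take p ++ a :: W.drop p).drop (W.length + 1 - ℓ) = W.drop (W.length - ℓ) := by
  rw [List.drop_append, List.length_take]
  have hmin : min p W.length = p := by omega
  rw [hmin]
  have h0 : (W.take p).drop (W.length + 1 - ℓ) = [] := by
    apply List.drop_eq_nil_of_le
    rw [List.length_take]; omega
  rw [h0, List.nil_append]
  have he : W.length + 1 - ℓ - p = (W.length - ℓ - p) + 1 := by omega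
  rw [he, List.drop_succ_cons, List.drop_drop]
  congr 1
  omega

lemma ins_isInst {β : Type} {n : ℕ} {W : List β} {ℓ : ℕ} (h : QB n W ℓ) (a : β) :
    IsInst (Zimin (n + 1)) (W.take ℓ ++ a :: W.drop ℓ) := by
  obtain ⟨x, hx, hdrop⟩ := QB_decomp h
  rw [isInst_succ_iff]
  refine ⟨W.take ℓ, a :: x, h.2.2, by simp, ?_⟩
  rw [hdrop]
  simp

lemma sInf_not_lt {β : Type} {n : ℕ} {W V : List β} {a b : β}
    (hW : QB n W (sInf {ℓ | QB n W ℓ})) (hV : QB n V (sInf {ℓ | QB n V ℓ}))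
    (heq : W.take (sInf {ℓ | QB n W ℓ}) ++ a :: W.drop (sInf {ℓ | QB n W ℓ})
         = V.take (sInf {ℓ | QB n V ℓ}) ++ b :: V.drop (sInf {ℓ | QB n V ℓ})) :
    ¬ sInf {ℓ | QB n W ℓ} < sInf {ℓ | QB n V ℓ} := by
  intro hlt
  set p := sInf {ℓ | QB n W ℓ} with hp
  set r := sInf {ℓ | QB n V ℓ} with hr
  have hpW : 2 * p < W.length := hW.1
  have hrV : 2 * r < V.length := hV.1
  have hlen : W.length = V.length := by
    have := congrArg List.length heq
    simp only [List.length_append, List.length_cons, List.length_take, List.length_drop] at this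
    omega
  have htake : V.take p = W.take p := by
    have e1 : (W.take p ++ a :: W.drop p).take p = W.take p := ins_take a le_rfl (by omega)
    have e2 : (V.take r ++ b :: V.drop r).take p = V.take p := ins_take b hlt.le (by omega)
    rw [heq] at e1
    rw [e2] at e1
    exact e1
  have hdrop : V.drop (V.length - p) = V.take p := by
    have e3 : (W.take p ++ a :: W.drop p).drop (W.length + 1 - p) = W.drop (W.length - p) :=
      ins_drop a (by omega)
    have e4 : (V.take r ++ b :: V.drop r).drop (V.length + 1 - p) = V.drop (V.length - p) :=
      ins_drop b (by omega)
    rw [heq, hlen] at e3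
    rw [e3] at e4
    rw [← e4, ← hlen, hW.2.1]
    exact htake.symm
  have hQ : QB n V p := ⟨by omega, hdrop, by rw [htake]; exact hW.2.2⟩
  have hle : r ≤ p := Nat.sInf_le (show p ∈ {ℓ | QB n V ℓ} from hQ)
  omega

/-! ### Main theorem -/

/-- Monotonicity: for all positive `n`, `M` and `q ≥ 1`, the probability that a
uniformly random `q`-ary word of length `M` is an instance of `Zₙ` is nondecreasing
in `M`: `|C(n,q,M+1)|/q^{M+1} ≥ |C(n,q,M)|/q^M`. -/
theorem ZC_prob_monotone (n M q : ℕ) (hn : 0 < n) (hM : 0 < M) (hq : 1 ≤ q) :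
    ((ZC n q M).ncard : ℚ) / (q : ℚ) ^ M ≤
      ((ZC n q (M + 1)).ncard : ℚ) / (q : ℚ) ^ (M + 1) := by
  obtain ⟨n, rfl⟩ : ∃ m, n = m + 1 := ⟨n - 1, by omega⟩
  set s := ZC (n + 1) q M with hs_def
  set t := ZC (n + 1) q (M + 1) with ht_def
  have hs : s.Finite :=
    Set.Finite.subset (List.finite_length_eq (Fin q) M) fun W hW => hW.1
  have ht : t.Finite :=
    Set.Finite.subset (List.finite_length_eq (Fin q) (M + 1)) fun W hW => hW.1
  -- the insertion map
  set m : List (Fin q) → ℕ := fun W => sInf {ℓ | QB n W ℓ} with hm_def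
  have hmem : ∀ W ∈ s, QB n W (m W) := by
    intro W hW
    exact Nat.sInf_mem (qb_exists_iff.mp hW.2)
  set F : List (Fin q) × Fin q → List (Fin q) :=
    fun p => p.1.take (m p.1) ++ p.2 :: p.1.drop (m p.1) with hF_def
  have key : s.ncard * q ≤ t.ncard := by
    have hprod : (hs.toFinset ×ˢ (Finset.univ : Finset (Fin q))).card = s.ncard * q := by
      rw [Finset.card_product, Finset.card_univ, Fintype.card_fin,
        Set.ncard_eq_toFinset_card s hs]
    rw [Set.ncard_eq_toFinset_card t ht, ← hprod]
    apply Finset.card_le_card_of_injOn F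
    · rintro ⟨W, a⟩ hWa
      simp only [Finset.mem_coe, Finset.mem_product, Set.Finite.mem_toFinset] at hWa ⊢
      obtain ⟨hWs, -⟩ := hWa
      have hQ := hmem W hWs
      constructor
      · have hmle : m W ≤ W.length := by have := hQ.1; omega
        simp only [hF_def, List.length_append, List.length_cons, List.length_take,
          List.length_drop]
        have := hWs.1
        omega
      · exact ins_isInst hQ a
    · rintro ⟨W, a⟩ hWa ⟨V, b⟩ hVb heq
      simp only [Finset.mem_coe, Finset.mem_product, Set.Finite.mem_toFinset] at hWa hVb
      have hQW := hmem W hWa.1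
      have hQV := hmem V hVb.1
      simp only [hF_def] at heq
      have h1 : ¬ m W < m V := sInf_not_lt hQW hQV heq
      have h2 : ¬ m V < m W := sInf_not_lt hQV hQW heq.symm
      have hmm : m W = m V := by omega
      rw [← hmm] at heq
      have hlenW : (W.take (m W)).length = m W := by
        rw [List.length_take]; have := hQW.1; omega
      have hlenV : (V.take (m W)).length = m W := by
        rw [List.length_take]; have := hQV.1; omega
      obtain ⟨htk, hcons⟩ := List.append_inj heq (by rw [hlenW, hlenV])
      have hab : a = b := by injection hcons
      have hdr : W.drop (m W) = V.drop (m W) := by injection hcons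
      have hWV : W = V := by
        rw [← List.take_append_drop (m W) W, ← List.take_append_drop (m W) V, htk, hdr]
      simp [hWV, hab, hmm]
  -- conclude with the rational inequality
  have hq0 : (0 : ℚ) < (q : ℚ) := by exact_mod_cast hq
  rw [div_le_div_iff₀ (by positivity) (by positivity)]
  have hcast : ((s.ncard * q : ℕ) : ℚ) ≤ ((t.ncard : ℕ) : ℚ) := by exact_mod_cast key
  calc (s.ncard : ℚ) * (q : ℚ) ^ (M + 1) = ((s.ncard * q : ℕ) : ℚ) * (q : ℚ) ^ M := by
        push_cast; ring
    _ ≤ (t.ncard : ℚ) * (q : ℚ) ^ M := mul_le_mul_of_nonneg_right hcast (by positivity)
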